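/- Let A be an associative ring with 1 and I a two-sided ideal. For y ∈ GL(n,A,I), the 2n×2n block-diagonal matrix diag(y⁻¹, y) belongs to E(2n,A,I). -/

import Mathlib

open Matrix

variable (n : Type*) [DecidableEq n] [Fintype n] (A : Type*) [Ring A]

/-- The elementary matrix `e_{ij}(ξ) = 1 + ξ E_{ij}` as a unit of the matrix ring
(its inverse is `e_{ij}(-ξ)`). -/
def elemUnit {n : Type*} [DecidableEq n] [Fintype n] {A : Type*} [Ring A]
    (i j : n) (h : i ≠ j) (ξ : A) : (Matrix n n A)ˣ where
  val := 1 + Matrix.single i j ξ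
  inv := 1 + Matrix.single i j (-ξ)
  val_inv := by
    have h0 : Matrix.single i j ξ * Matrix.single i j (-ξ) = 0 :=
      Matrix.single_mul_single_of_ne (c := ξ) i j i h.symm (-ξ)
    have h1 : Matrix.single i j ξ + Matrix.single i j (-ξ) = 0 := by
      rw [← Matrix.single_add, add_neg_cancel, Matrix.single_zero]
    rw [mul_add, mul_one, add_mul, one_mul, h0, add_zero, add_assoc, h1, add_zero]
  inv_val := by
    have h0 : Matrix.single i j (-ξ) * Matrix.single i j ξ = 0 :=
      Matrix.single_mul_single_of_ne (c := -ξ) i j i h.symm ξ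
    have h1 : Matrix.single i j (-ξ) + Matrix.single i j ξ = 0 := by
      rw [← Matrix.single_add, neg_add_cancel, Matrix.single_zero]
    rw [mul_add, mul_one, add_mul, one_mul, h0, add_zero, add_assoc, h1, add_zero]

/-- The subgroup `E(n,S)` of `GL(n,A)` generated by the elementary matrices
`e_{ij}(ξ)` with `ξ ∈ S`, `i ≠ j`. -/
def elemSubgroup (S : Set A) : Subgroup (Matrix n n A)ˣ :=
  Subgroup.closure {u : (Matrix n n A)ˣ | ∃ i j : n, ∃ ξ ∈ S, i ≠ j ∧
    u.val = 1 + Matrix.single i j ξ}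

/-- The relative elementary subgroup `E(n,A,I)`, the normal closure of `E(n,I)`
in `E(n,A)`. -/
def relElemSubgroup (I : TwoSidedIdeal A) : Subgroup (Matrix n n A)ˣ :=
  Subgroup.closure {x : (Matrix n n A)ˣ |
    ∃ c ∈ elemSubgroup n A (Set.univ : Set A), ∃ u ∈ elemSubgroup n A {a : A | a ∈ I},
      x = c * u * c⁻¹}

/-- The principal congruence subgroup `GL(n,A,K)`: invertible matrices congruent to the
identity modulo `K`.  (This set is already a group, so it coincides with the subgroup it
generates.) -/
def congrSubgroup (K : TwoSidedIdeal A) : Subgroup (Matrix n n A)ˣ :=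
  Subgroup.closure {u : (Matrix n n A)ˣ | ∀ i j : n, (u.val - 1) i j ∈ K}

section Aux
variable {N : ℕ} {A : Type*} [Ring A]

def blockT12 (M : Matrix (Fin N) (Fin N) A) :
    (Matrix (Fin N ⊕ Fin N) (Fin N ⊕ Fin N) A)ˣ where
  val := Matrix.fromBlocks 1 M 0 1
  inv := Matrix.fromBlocks 1 (-M) 0 1
  val_inv := by rw [Matrix.fromBlocks_multiply]; simp [Matrix.fromBlocks_one]
  inv_val := by rw [Matrix.fromBlocks_multiply]; simp [Matrix.fromBlocks_one]

def blockT21 (M : Matrix (Fin N) (Fin N) A) :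
    (Matrix (Fin N ⊕ Fin N) (Fin N ⊕ Fin N) A)ˣ where
  val := Matrix.fromBlocks 1 0 M 1
  inv := Matrix.fromBlocks 1 0 (-M) 1
  val_inv := by rw [Matrix.fromBlocks_multiply]; simp [Matrix.fromBlocks_one]
  inv_val := by rw [Matrix.fromBlocks_multiply]; simp [Matrix.fromBlocks_one]

lemma blockT12_mul (M M' : Matrix (Fin N) (Fin N) A) :
    blockT12 M * blockT12 M' = blockT12 (M + M') := by
  ext1
  show Matrix.fromBlocks 1 M 0 1 * Matrix.fromBlocks 1 M' 0 1 = _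
  rw [Matrix.fromBlocks_multiply]
  simp [blockT12, add_comm]

lemma blockT21_mul (M M' : Matrix (Fin N) (Fin N) A) :
    blockT21 M * blockT21 M' = blockT21 (M + M') := by
  ext1
  show Matrix.fromBlocks 1 0 M 1 * Matrix.fromBlocks 1 0 M' 1 = _
  rw [Matrix.fromBlocks_multiply]
  simp [blockT21, add_comm]

lemma blockT12_inv (M : Matrix (Fin N) (Fin N) A) :
    (blockT12 M)⁻¹ = blockT12 (-M) := by ext1; rfl

lemma blockT21_inv (M : Matrix (Fin N) (Fin N) A) :
    (blockT21 M)⁻¹ = blockT21 (-M) := by ext1; rfl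

lemma blockT12_zero : (blockT12 (0 : Matrix (Fin N) (Fin N) A)) = 1 := by
  ext1; show Matrix.fromBlocks 1 0 0 1 = 1; rw [Matrix.fromBlocks_one]

lemma blockT21_zero : (blockT21 (0 : Matrix (Fin N) (Fin N) A)) = 1 := by
  ext1; show Matrix.fromBlocks 1 0 0 1 = 1; rw [Matrix.fromBlocks_one]

lemma blockT12_mul_assoc (M M' : Matrix (Fin N) (Fin N) A)
    (x : (Matrix (Fin N ⊕ Fin N) (Fin N ⊕ Fin N) A)ˣ) :
    blockT12 M * (blockT12 M' * x) = blockT12 (M + M') * x := by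
  rw [← mul_assoc, blockT12_mul]

lemma blockT21_mul_assoc (M M' : Matrix (Fin N) (Fin N) A)
    (x : (Matrix (Fin N ⊕ Fin N) (Fin N ⊕ Fin N) A)ˣ) :
    blockT21 M * (blockT21 M' * x) = blockT21 (M + M') * x := by
  rw [← mul_assoc, blockT21_mul]

lemma fromBlocks_stdBasis12 (i j : Fin N) (ξ : A) :
    Matrix.fromBlocks 0 (Matrix.single i j ξ) 0 0 =
      (Matrix.single (Sum.inl i) (Sum.inr j) ξ :
        Matrix (Fin N ⊕ Fin N) (Fin N ⊕ Fin N) A) := by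
  ext (k | k) (l | l) <;> simp [Matrix.single, Matrix.fromBlocks]

lemma fromBlocks_stdBasis21 (i j : Fin N) (ξ : A) :
    Matrix.fromBlocks 0 0 (Matrix.single i j ξ) 0 =
      (Matrix.single (Sum.inr i) (Sum.inl j) ξ :
        Matrix (Fin N ⊕ Fin N) (Fin N ⊕ Fin N) A) := by
  ext (k | k) (l | l) <;> simp [Matrix.single, Matrix.fromBlocks]

lemma blockT12_mem (S : Set A) (M : Matrix (Fin N) (Fin N) A)
    (hM : ∀ i j, M i j ∈ S) : blockT12 M ∈ elemSubgroup (Fin N ⊕ Fin N) A S := by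
  have key : ∀ s : Finset (Fin N × Fin N),
      blockT12 (∑ p ∈ s, Matrix.single p.1 p.2 (M p.1 p.2)) ∈
        elemSubgroup (Fin N ⊕ Fin N) A S := by
    intro s
    induction s using Finset.induction_on with
    | empty => rw [Finset.sum_empty, blockT12_zero]; exact one_mem _
    | @insert p s hp ih =>
        rw [Finset.sum_insert hp, ← blockT12_mul]
        refine mul_mem ?_ ih
        apply Subgroup.subset_closure
        refine ⟨Sum.inl p.1, Sum.inr p.2, M p.1 p.2, hM p.1 p.2, by simp, ?_⟩
        show Matrix.fromBlocks 1 (Matrix.single p.1 p.2 (M p.1 p.2)) 0 1 = _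
        rw [← fromBlocks_stdBasis12,
          show (1 : Matrix (Fin N ⊕ Fin N) (Fin N ⊕ Fin N) A) = Matrix.fromBlocks 1 0 0 1 from
            (Matrix.fromBlocks_one).symm, Matrix.fromBlocks_add]
        simp
  have hM' : M = ∑ p ∈ (Finset.univ : Finset (Fin N × Fin N)),
      Matrix.single p.1 p.2 (M p.1 p.2) := by
    rw [← Finset.univ_product_univ,
      Finset.sum_product (f := fun p : Fin N × Fin N => Matrix.single p.1 p.2 (M p.1 p.2))]
    exact Matrix.matrix_eq_sum_single M
  rw [hM']; exact key _

lemma blockT21_mem (S : Set A) (M : Matrix (Fin N) (Fin N) A)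
    (hM : ∀ i j, M i j ∈ S) : blockT21 M ∈ elemSubgroup (Fin N ⊕ Fin N) A S := by
  have key : ∀ s : Finset (Fin N × Fin N),
      blockT21 (∑ p ∈ s, Matrix.single p.1 p.2 (M p.1 p.2)) ∈
        elemSubgroup (Fin N ⊕ Fin N) A S := by
    intro s
    induction s using Finset.induction_on with
    | empty => rw [Finset.sum_empty, blockT21_zero]; exact one_mem _
    | @insert p s hp ih =>
        rw [Finset.sum_insert hp, ← blockT21_mul]
        refine mul_mem ?_ ih
        apply Subgroup.subset_closure
        refine ⟨Sum.inr p.1, Sum.inl p.2, M p.1 p.2, hM p.1 p.2, by simp, ?_⟩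
        show Matrix.fromBlocks 1 0 (Matrix.single p.1 p.2 (M p.1 p.2)) 1 = _
        rw [← fromBlocks_stdBasis21,
          show (1 : Matrix (Fin N ⊕ Fin N) (Fin N ⊕ Fin N) A) = Matrix.fromBlocks 1 0 0 1 from
            (Matrix.fromBlocks_one).symm, Matrix.fromBlocks_add]
        simp
  have hM' : M = ∑ p ∈ (Finset.univ : Finset (Fin N × Fin N)),
      Matrix.single p.1 p.2 (M p.1 p.2) := by
    rw [← Finset.univ_product_univ,
      Finset.sum_product (f := fun p : Fin N × Fin N => Matrix.single p.1 p.2 (M p.1 p.2))]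
    exact Matrix.matrix_eq_sum_single M
  rw [hM']; exact key _

end Aux

/-- The block diagonal matrix `diag(y⁻¹, y)` as a unit of the `2n × 2n` matrix ring. -/
def hyperbolicUnit {N : ℕ} {A : Type*} [Ring A] (y : (Matrix (Fin N) (Fin N) A)ˣ) :
    (Matrix (Fin N ⊕ Fin N) (Fin N ⊕ Fin N) A)ˣ where
  val := Matrix.fromBlocks (y⁻¹).val 0 0 y.val
  inv := Matrix.fromBlocks y.val 0 0 (y⁻¹).val
  val_inv := by
    rw [Matrix.fromBlocks_multiply]
    simp only [mul_zero, zero_mul, add_zero, zero_add, mul_one, one_mul,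
      Units.mul_inv, Units.inv_mul]
    rw [Matrix.fromBlocks_one]
  inv_val := by
    rw [Matrix.fromBlocks_multiply]
    simp only [mul_zero, zero_mul, add_zero, zero_add, mul_one, one_mul,
      Units.mul_inv, Units.inv_mul]
    rw [Matrix.fromBlocks_one]

/-- For `y ∈ GL(n,A,I)`, the `2n × 2n` matrix `diag(y⁻¹, y)` belongs to the relative
elementary subgroup `E(2n,A,I)`. -/
theorem hyperbolic_mem_relElem {N : ℕ} {A : Type*} [Ring A]
    (I : TwoSidedIdeal A) (y : (Matrix (Fin N) (Fin N) A)ˣ)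
    (hy : ∀ i j, (y.val - 1) i j ∈ I) :
    hyperbolicUnit y ∈ relElemSubgroup (Fin N ⊕ Fin N) A I := by
  set u : Matrix (Fin N) (Fin N) A := y.val with hu
  set v : Matrix (Fin N) (Fin N) A := (y⁻¹).val with hvdef
  have hvu : v * u = 1 := y.inv_val
  have huv : u * v = 1 := y.val_inv
  -- entries of v - 1 lie in I
  have ha : ∀ i j, (v - 1) i j ∈ I := by
    have hform : v - 1 = -(v * (u - 1)) := by
      rw [Matrix.mul_sub, hvu, Matrix.mul_one]; abel
    intro i j
    rw [hform]
    refine neg_mem ?_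
    rw [Matrix.mul_apply]
    exact sum_mem fun k _ => I.mul_mem_left _ _ (hy k j)
  -- the key factorization into six block transvections
  have key : hyperbolicUnit y =
      blockT12 v * blockT21 (-u) * blockT12 v * blockT12 (-1) * blockT21 1 * blockT12 (-1) := by
    ext1
    show Matrix.fromBlocks v 0 0 u = _
    simp only [Units.val_mul]
    show _ = Matrix.fromBlocks 1 v 0 1 * Matrix.fromBlocks 1 0 (-u) 1 * Matrix.fromBlocks 1 v 0 1
      * Matrix.fromBlocks 1 (-1) 0 1 * Matrix.fromBlocks 1 0 1 1 * Matrix.fromBlocks 1 (-1) 0 1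
    simp only [Matrix.fromBlocks_multiply]
    rw [Matrix.fromBlocks_inj]
    refine ⟨?_, ?_, ?_, ?_⟩ <;> simp [mul_neg, hvu, huv]
  -- conjugating elements
  set c₂ : (Matrix (Fin N ⊕ Fin N) (Fin N ⊕ Fin N) A)ˣ :=
    blockT12 (1 : Matrix (Fin N) (Fin N) A) * blockT21 (-1) with hc2
  set c₃ : (Matrix (Fin N ⊕ Fin N) (Fin N ⊕ Fin N) A)ˣ :=
    c₂ * blockT12 (1 : Matrix (Fin N) (Fin N) A) with hc3
  have heq : hyperbolicUnit y =
      blockT12 (v - 1) * (c₂ * blockT21 (-(u - 1)) * c₂⁻¹) *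
        (c₃ * blockT12 (v - 1) * c₃⁻¹) := by
    rw [key, hc3, hc2]
    simp only [_root_.mul_inv_rev, blockT12_inv, blockT21_inv, mul_assoc, blockT12_mul_assoc,
      blockT21_mul_assoc, blockT12_mul, blockT21_mul, blockT12_zero, blockT21_zero,
      one_mul, mul_one, neg_neg, neg_add_cancel]
    have e1 : v - 1 + 1 = v := by abel
    have e2 : -1 + -(u - 1) + 1 + -1 = -u := by abel
    have e3 : 1 + (v - 1) + -1 = v + -1 := by abel
    rw [e1, e2, e3]
  rw [heq]
  have hIset : ∀ i j : Fin N, (-(u - 1)) i j ∈ {a : A | a ∈ I} := fun i j => by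
    simpa using neg_mem (hy i j)
  have hc2mem : c₂ ∈ elemSubgroup (Fin N ⊕ Fin N) A (Set.univ : Set A) := by
    rw [hc2]
    exact mul_mem (blockT12_mem _ _ fun _ _ => Set.mem_univ _)
      (blockT21_mem _ _ fun _ _ => Set.mem_univ _)
  have hc3mem : c₃ ∈ elemSubgroup (Fin N ⊕ Fin N) A (Set.univ : Set A) := by
    rw [hc3]
    exact mul_mem hc2mem (blockT12_mem _ _ fun _ _ => Set.mem_univ _)
  refine mul_mem (mul_mem ?_ ?_) ?_
  · exact Subgroup.subset_closure
      ⟨1, one_mem _, blockT12 (v - 1), blockT12_mem _ _ ha, by group⟩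
  · exact Subgroup.subset_closure
      ⟨c₂, hc2mem, blockT21 (-(u - 1)), blockT21_mem _ _ hIset, rfl⟩
  · exact Subgroup.subset_closure
      ⟨c₃, hc3mem, blockT12 (v - 1), blockT12_mem _ _ ha, rfl⟩
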